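/- Let E be a real inner product space that is a complete normed space, let c > 0, a > 0, and let y, m ∈ E. The function l ↦ a·H_c(‖y − l‖) + (1/2)‖m − l‖² has a unique minimizer over E, equal to y + (1 − a / max(‖m − y‖/c, a+1)) · (m − y). -/

import Mathlib

/-- The Huber function with threshold `c`. -/
noncomputable def huber (c x : ℝ) : ℝ :=
  if |x| ≤ c then x ^ 2 / 2 else c * (|x| - c / 2)

lemma huber_subgrad {c : ℝ} (hc : 0 < c) {u u0 : ℝ} (hu : 0 ≤ u) (hu0 : 0 ≤ u0) :
    min u0 c * (u - u0) ≤ huber c u - huber c u0 := by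
  unfold huber
  rw [abs_of_nonneg hu, abs_of_nonneg hu0]
  rcases le_or_gt u c with h1 | h1 <;> rcases le_or_gt u0 c with h2 | h2
  · rw [if_pos h1, if_pos h2, min_eq_left h2]
    nlinarith [sq_nonneg (u - u0)]
  · rw [if_pos h1, if_neg (not_le.2 h2), min_eq_right h2.le]
    nlinarith [sq_nonneg (u - c)]
  · rw [if_neg (not_le.2 h1), if_pos h2, min_eq_left h2]
    nlinarith [sq_nonneg (c - u0), mul_nonneg (sub_nonneg.2 h2) (le_of_lt (sub_pos.2 h1))]
  · rw [if_neg (not_le.2 h1), if_neg (not_le.2 h2), min_eq_right h2.le]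
    nlinarith

/-- Let `E` be a real inner product space that is a complete normed space, `c > 0`, `a > 0`,
and `y m ∈ E`. The function `l ↦ a·H_c(‖y − l‖) + (1/2)‖m − l‖²` has a unique minimizer over
`E`, equal to `y + (1 − a / max (‖m − y‖/c) (a+1)) • (m − y)`. -/
theorem L_update_prox {E : Type*} [NormedAddCommGroup E] [InnerProductSpace ℝ E]
    [CompleteSpace E] (c a : ℝ) (hc : 0 < c) (ha : 0 < a) (y m : E) :
    let f : E → ℝ := fun l => a * huber c ‖y - l‖ + (1 / 2) * ‖m - l‖ ^ 2
    let p : E := y + (1 - a / max (‖m - y‖ / c) (a + 1)) • (m - y)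
    (∀ l, f p ≤ f l) ∧ (∀ l, (∀ w, f l ≤ f w) → l = p) := by
  intro f p
  set v : E := m - y with hv
  set r : ℝ := ‖v‖ with hrdef
  have hr : (0:ℝ) ≤ r := norm_nonneg v
  set M : ℝ := max (r / c) (a + 1) with hM
  have hM1 : a + 1 ≤ M := le_max_right _ _
  have hMpos : 0 < M := lt_of_lt_of_le (by linarith) hM1
  set s : ℝ := 1 - a / M with hs
  have hspos : 0 < s := by
    have : a / M < 1 := (div_lt_one hMpos).2 (by linarith)
    simp only [hs]; linarith
  have hpy : p - y = s • v := by
    simp only [p, hs, hv, hM, hrdef]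
    abel
  have hmp : m - p = (a / M) • v := by
    have h1 : m - p = v - s • v := by
      simp only [p, hv]; abel
    rw [h1, hs, sub_smul, one_smul]
    abel
  have hu0 : ‖y - p‖ = s * r := by
    rw [norm_sub_rev, hpy, norm_smul, Real.norm_eq_abs, abs_of_pos hspos]
  have hrM : r / M = min (s * r) c := by
    rcases le_total (r / c) (a + 1) with h | h
    · have hMe : M = a + 1 := max_eq_right h
      have hse : s = 1 / (a + 1) := by
        rw [hs, hMe]; field_simp; ring
      have hle : r / (a + 1) ≤ c := by
        rw [div_le_iff₀ (by linarith)]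
        calc r = (r / c) * c := by field_simp
        _ ≤ (a + 1) * c := by nlinarith
        _ = c * (a + 1) := by ring
      rw [hMe, hse, min_eq_left (by rw [one_div, inv_mul_eq_div]; exact hle)]
      rw [one_div, inv_mul_eq_div]
    · have hMe : M = r / c := max_eq_left h
      have hrpos : 0 < r := by
        by_contra hcon
        have : r = 0 := le_antisymm (not_lt.1 hcon) hr
        rw [this] at h; simp at h; nlinarith
      have hsr : s * r = r - a * c := by
        rw [hs, hMe]
        field_simp
      have hge : c ≤ r - a * c := by
        have : (a + 1) * c ≤ r := (le_div_iff₀ hc).1 h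
        nlinarith
      rw [hMe, hsr, min_eq_right hge]
      field_simp
  have key : ∀ l : E, f p + (1/2) * ‖l - p‖ ^ 2 ≤ f l := by
    intro l
    have hCS : (inner ℝ v (l - y) : ℝ) ≤ r * ‖y - l‖ := by
      calc (inner ℝ v (l - y) : ℝ) ≤ ‖v‖ * ‖l - y‖ := real_inner_le_norm v (l - y)
      _ = r * ‖y - l‖ := by rw [norm_sub_rev l y]
    have h3 : (inner ℝ (m - p) (l - p) : ℝ) = (a / M) * ((inner ℝ v (l - y) : ℝ) - s * r ^ 2) := by
      have hlp : l - p = (l - y) - s • v := by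
        have := hpy
        have h' : p = y + s • v := by rw [← this]; abel
        rw [h']; abel
      rw [hmp, hlp, real_inner_smul_left, inner_sub_right, real_inner_smul_right,
        real_inner_self_eq_norm_sq]
    have h4 : ‖m - l‖ ^ 2 = ‖m - p‖ ^ 2 + 2 * (inner ℝ (m - p) (p - l) : ℝ) + ‖p - l‖ ^ 2 := by
      have : m - l = (m - p) + (p - l) := by abel
      rw [this, norm_add_sq_real]
    have hhub : a * ((r / M) * (‖y - l‖ - s * r)) ≤
        a * (huber c ‖y - l‖ - huber c ‖y - p‖) := by
      apply mul_le_mul_of_nonneg_left _ ha.le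
      rw [hu0, hrM]
      exact huber_subgrad hc (norm_nonneg _) (by positivity)
    have h2 : (a / M) * ((inner ℝ v (l - y) : ℝ) - s * r ^ 2) ≤
        a * ((r / M) * (‖y - l‖ - s * r)) := by
      have haM : (0:ℝ) ≤ a / M := by positivity
      have : (inner ℝ v (l - y) : ℝ) - s * r ^ 2 ≤ r * ‖y - l‖ - s * r ^ 2 := by linarith
      calc (a / M) * ((inner ℝ v (l - y) : ℝ) - s * r ^ 2)
          ≤ (a / M) * (r * ‖y - l‖ - s * r ^ 2) := mul_le_mul_of_nonneg_left this haM
      _ = a * ((r / M) * (‖y - l‖ - s * r)) := by ring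
    have hip : (inner ℝ (m - p) (p - l) : ℝ) = -(inner ℝ (m - p) (l - p) : ℝ) := by
      rw [← inner_neg_right]; congr 1; abel
    have hn2 : ‖p - l‖ ^ 2 = ‖l - p‖ ^ 2 := by rw [norm_sub_rev p l]
    have hfin := le_trans h2 hhub
    simp only [f]
    rw [h4, hip, h3]
    linarith [hfin, hn2]
  constructor
  · intro l
    exact le_trans (le_add_of_nonneg_right (by positivity)) (key l)
  · intro l hl
    have h1 := key l
    have h2 := hl p
    have h3 : (1:ℝ) / 2 * ‖l - p‖ ^ 2 ≤ 0 :=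
      (add_le_iff_nonpos_right _).1 (h1.trans h2)
    have hz : ‖l - p‖ = 0 := by nlinarith [norm_nonneg (l - p)]
    exact sub_eq_zero.1 (norm_eq_zero.1 hz)
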